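/- Every monotone multilinear Boolean circuit is 1-multilinear: for each output gate o of the circuit and each prime implicant p of the function computed at o, there is a term t ∈ T(o) representing p in which no variable occurs more than once. -/

import Mathlib

open BigOperators

namespace MC

/-- A gate label: an input gate labeled by a variable or a Boolean constant,
or an OR/AND gate with the indices of its two direct predecessors. -/
inductive GateLabel (V : Type) where
  | var (v : V)
  | const (b : Bool)
  | or (a b : ℕ)
  | and (a b : ℕ)

def GateLabel.isOp {V : Type} : GateLabel V → Bool
  | .or _ _ => true
  | .and _ _ => true
  | _ => false

def GateLabel.isAnd {V : Type} : GateLabel V → Bool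
  | .and _ _ => true
  | _ => false

def GateLabel.isOr {V : Type} : GateLabel V → Bool
  | .or _ _ => true
  | _ => false

/-- A monotone Boolean circuit: a finite DAG whose gates are numbered
`0, …, n-1` in topological order (direct predecessors of a gate have smaller
indices, which enforces acyclicity). Gates of indegree 0 are labeled by
variables or Boolean constants, the remaining gates are OR/AND gates of
indegree 2. -/
structure Circuit (V : Type) where
  n : ℕ
  label : Fin n → GateLabel V
  wf : ∀ (i : Fin n) (a b : ℕ),
    (label i = .or a b ∨ label i = .and a b) → a < i.1 ∧ b < i.1

namespace Circuit

variable {V : Type}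

/-- The set `T(g)` of terms associated with gate `g`: for an input gate the
singleton of its label, for an OR gate the union of the term sets of its two
direct predecessors, and for an AND gate the set of concatenations `t₁ t₂` of
terms of its two direct predecessors. A term is a word over variables and
Boolean constants. -/
inductive MemTerms (C : Circuit V) : Fin C.n → List (V ⊕ Bool) → Prop
  | var {i : Fin C.n} {v : V} : C.label i = .var v → MemTerms C i [Sum.inl v]
  | const {i : Fin C.n} {b : Bool} : C.label i = .const b → MemTerms C i [Sum.inr b]
  | or_left {i : Fin C.n} {a b : ℕ} {t : List (V ⊕ Bool)}
      (h : C.label i = .or a b) (ha : a < C.n) :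
      MemTerms C ⟨a, ha⟩ t → MemTerms C i t
  | or_right {i : Fin C.n} {a b : ℕ} {t : List (V ⊕ Bool)}
      (h : C.label i = .or a b) (hb : b < C.n) :
      MemTerms C ⟨b, hb⟩ t → MemTerms C i t
  | and {i : Fin C.n} {a b : ℕ} {t₁ t₂ : List (V ⊕ Bool)}
      (h : C.label i = .and a b) (ha : a < C.n) (hb : b < C.n) :
      MemTerms C ⟨a, ha⟩ t₁ → MemTerms C ⟨b, hb⟩ t₂ → MemTerms C i (t₁ ++ t₂)

end Circuit

/-- Evaluation of a single letter (variable or constant) of a term. -/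
def litEval {V : Type} (σ : V → Bool) : V ⊕ Bool → Bool
  | Sum.inl v => σ v
  | Sum.inr b => b

/-- A term evaluates to true iff the conjunction of its letters is true. -/
def termEval {V : Type} (σ : V → Bool) (t : List (V ⊕ Bool)) : Bool :=
  t.all (litEval σ)

/-- The (monotone Boolean) function computed at gate `g`: the disjunction,
over all terms `t ∈ T(g)`, of the conjunction represented by `t`. -/
def Circuit.gateFun {V : Type} (C : Circuit V) (g : Fin C.n) (σ : V → Bool) : Prop :=
  ∃ t : List (V ⊕ Bool), C.MemTerms g t ∧ termEval σ t = true

/-- A Boolean function depends on the variable `v`. -/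
def Depends {V : Type} [DecidableEq V] (f : (V → Bool) → Prop) (v : V) : Prop :=
  ∃ σ : V → Bool,
    ¬(f (Function.update σ v false) ↔ f (Function.update σ v true))

/-- A monotone Boolean circuit is multilinear if for every AND gate the
functions computed at its two direct predecessors share no variable. -/
def Circuit.Multilinear {V : Type} [DecidableEq V] (C : Circuit V) : Prop :=
  ∀ (i : Fin C.n) (a b : ℕ), C.label i = .and a b →
    ∀ (ha : a < C.n) (hb : b < C.n) (v : V),
      ¬(Depends (C.gateFun ⟨a, ha⟩) v ∧ Depends (C.gateFun ⟨b, hb⟩) v)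

/-- `S` (a conjunction of variables) is an implicant of `f`: whenever all the
variables of `S` are true, `f` is true. -/
def Implicant {V : Type} (f : (V → Bool) → Prop) (S : Finset V) : Prop :=
  ∀ σ : V → Bool, (∀ v ∈ S, σ v = true) → f σ

/-- A prime implicant: an implicant minimal with respect to included variables. -/
def PrimeImplicant {V : Type} (f : (V → Bool) → Prop) (S : Finset V) : Prop :=
  Implicant f S ∧ ∀ S' ⊂ S, ¬ Implicant f S'

/-- The set of variables occurring in a term. -/
def termVars {V : Type} (t : List (V ⊕ Bool)) : Set V := {v : V | Sum.inl v ∈ t}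

/-- A term `t` represents the monom with variable set `S` if the set of
variables occurring in `t` equals `S`. -/
def Represents {V : Type} (t : List (V ⊕ Bool)) (S : Finset V) : Prop :=
  termVars t = ↑S

/-- The circuit computes the form `F` (a family of monotone Boolean
functions), the function `F i` being computed at the output gate `out i`. -/
def Circuit.Computes {V ι : Type} (C : Circuit V) (out : ι → Fin C.n)
    (F : ι → (V → Bool) → Prop) : Prop :=
  ∀ (i : ι) (σ : V → Bool), C.gateFun (out i) σ ↔ F i σ

/-- The circuit (with output gates `out`, computing the form `F`) is
`q`-multilinear: for each prime implicant `S` of each `F i` there is a term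
`t ∈ T(out i)` representing `S` in which no variable occurs more than `q`
times. -/
def Circuit.QMultilinear {V ι : Type} [DecidableEq V] (C : Circuit V)
    (out : ι → Fin C.n) (F : ι → (V → Bool) → Prop) (q : ℕ) : Prop :=
  ∀ (i : ι) (S : Finset V), PrimeImplicant (F i) S →
    ∃ t : List (V ⊕ Bool), C.MemTerms (out i) t ∧ Represents t S ∧
      ∀ v : V, t.count (Sum.inl v) ≤ q

/-- The circuit is strictly `q`-multilinear: no term of any gate contains more
than `q` occurrences of a single variable. -/
def Circuit.StrictlyQMultilinear {V : Type} [DecidableEq V] (C : Circuit V) (q : ℕ) : Prop :=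
  ∀ (g : Fin C.n) (t : List (V ⊕ Bool)), C.MemTerms g t →
    ∀ v : V, t.count (Sum.inl v) ≤ q

/-- The size of a circuit: the number of its non-input gates. -/
def Circuit.size {V : Type} (C : Circuit V) : ℕ :=
  (Finset.univ.filter fun i : Fin C.n => (C.label i).isOp = true).card

/-- The number of AND gates of a circuit. -/
def Circuit.andGateCount {V : Type} (C : Circuit V) : ℕ :=
  (Finset.univ.filter fun i : Fin C.n => (C.label i).isAnd = true).card

/-- The number of OR gates of a circuit. -/
def Circuit.orGateCount {V : Type} (C : Circuit V) : ℕ :=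
  (Finset.univ.filter fun i : Fin C.n => (C.label i).isOr = true).card

/-- The circuit has no Boolean-constant input gates. -/
def Circuit.NoConstants {V : Type} (C : Circuit V) : Prop :=
  ∀ (i : Fin C.n) (b : Bool), C.label i ≠ .const b

/-- `AndDepth C g d`: there is a path from an input gate to the gate `g`
containing exactly `d` AND gates. -/
inductive Circuit.AndDepth {V : Type} (C : Circuit V) : Fin C.n → ℕ → Prop
  | input {i : Fin C.n} : (C.label i).isOp = false → AndDepth C i 0
  | or_step {i : Fin C.n} {a b p d : ℕ}
      (h : C.label i = .or a b) (hp : p = a ∨ p = b) (hpn : p < C.n) :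
      AndDepth C ⟨p, hpn⟩ d → AndDepth C i d
  | and_step {i : Fin C.n} {a b p d : ℕ}
      (h : C.label i = .and a b) (hp : p = a ∨ p = b) (hpn : p < C.n) :
      AndDepth C ⟨p, hpn⟩ d → AndDepth C i (d + 1)

/-- `AltDepth C g l d`: there is a path from an input gate to the gate `g`
whose non-input gates form exactly `d` blocks of consecutive OR gates and
consecutive AND gates, the last block consisting of OR gates (if
`l = some false`) or of AND gates (if `l = some true`); `l = none` when the
path consists of a single input gate. -/
inductive Circuit.AltDepth {V : Type} (C : Circuit V) : Fin C.n → Option Bool → ℕ → Prop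
  | input {i : Fin C.n} : (C.label i).isOp = false → AltDepth C i none 0
  | or_step {i : Fin C.n} {a b p : ℕ} {l : Option Bool} {d : ℕ}
      (h : C.label i = .or a b) (hp : p = a ∨ p = b) (hpn : p < C.n) :
      AltDepth C ⟨p, hpn⟩ l d →
      AltDepth C i (some false) (if l = some false then d else d + 1)
  | and_step {i : Fin C.n} {a b p : ℕ} {l : Option Bool} {d : ℕ}
      (h : C.label i = .and a b) (hp : p = a ∨ p = b) (hpn : p < C.n) :
      AltDepth C ⟨p, hpn⟩ l d →
      AltDepth C i (some true) (if l = some true then d else d + 1)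

/-- The alternation depth of the circuit (with output gates `out`) is at most `d`. -/
def Circuit.AltDepthLE {V ι : Type} (C : Circuit V) (out : ι → Fin C.n) (d : ℕ) : Prop :=
  ∀ (i : ι) (l : Option Bool) (c : ℕ), C.AltDepth (out i) l c → c ≤ d

/-- A `Π_d` circuit: alternation depth at most `d` and all output gates are AND gates. -/
def Circuit.IsPi {V ι : Type} (C : Circuit V) (out : ι → Fin C.n) (d : ℕ) : Prop :=
  (∀ i : ι, (C.label (out i)).isAnd = true) ∧ C.AltDepthLE out d

/-- A `Σ_d` circuit: alternation depth at most `d` and all output gates are OR gates. -/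
def Circuit.IsSigma {V ι : Type} (C : Circuit V) (out : ι → Fin C.n) (d : ℕ) : Prop :=
  (∀ i : ι, (C.label (out i)).isOr = true) ∧ C.AltDepthLE out d

/-- A monotone Boolean function. -/
def MonotoneFun {V : Type} (f : (V → Bool) → Prop) : Prop :=
  ∀ σ σ' : V → Bool, (∀ v : V, σ v = true → σ' v = true) → f σ → f σ'

/-- A semi-disjoint bilinear form on the variables `x_0,…,x_{n-1}` (the left
summands) and `y_0,…,y_{n-1}` (the right summands): a family of monotone
Boolean functions such that every prime implicant consists of exactly one
`x`-variable and one `y`-variable, for each function every variable occurs in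
at most one of its prime implicants, and the sets of prime implicants of
different functions of the family are pairwise disjoint. -/
def SemiDisjointBilinear {n : ℕ} {ι : Type}
    (F : ι → ((Fin n ⊕ Fin n) → Bool) → Prop) : Prop :=
  (∀ i : ι, MonotoneFun (F i)) ∧
  (∀ (i : ι) (S : Finset (Fin n ⊕ Fin n)), PrimeImplicant (F i) S →
    ∃ a b : Fin n, S = {Sum.inl a, Sum.inr b}) ∧
  (∀ (i : ι) (S S' : Finset (Fin n ⊕ Fin n)) (z : Fin n ⊕ Fin n),
    PrimeImplicant (F i) S → PrimeImplicant (F i) S' → z ∈ S → z ∈ S' → S = S') ∧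
  (∀ (i j : ι) (S : Finset (Fin n ⊕ Fin n)), i ≠ j →
    PrimeImplicant (F i) S → ¬ PrimeImplicant (F j) S)

/-- The total number of prime implicants of the form `F`. -/
noncomputable def totalPrimeImplicants {V ι : Type} (F : ι → (V → Bool) → Prop) : ℕ :=
  Nat.card {pr : ι × Finset V // PrimeImplicant (F pr.1) pr.2}

/-- A cell of the `k`-dimensional grid `[n]^k`. -/
abbrev Cell (k n : ℕ) := Fin k → Fin n

/-- The function `Isol_{k,n}`: for a `k`-dimensional `n × ⋯ × n` Boolean
matrix `σ`, it is true iff every line (a set of `n` entries obtained by fixing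
`k-1` indices and letting the remaining one, in direction `d`, range over `[n]`)
contains at least one `1`. -/
def IsolFun (k n : ℕ) (σ : Cell k n → Bool) : Prop :=
  ∀ (d : Fin k) (c : Cell k n), ∃ x : Cell k n,
    (∀ j : Fin k, j ≠ d → x j = c j) ∧ σ x = true

/-- Every line of the grid contains exactly one cell of `S`. -/
def ExactlyOnePerLine (k n : ℕ) (S : Finset (Cell k n)) : Prop :=
  ∀ (d : Fin k) (c : Cell k n),
    ∃! x : Cell k n, x ∈ S ∧ ∀ j : Fin k, j ≠ d → x j = c j

/-- `|SPI(Isol_{k,n})|`: the number of shortest prime implicants of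
`Isol_{k,n}`, i.e. the number of sets `S` of `n^{k-1}` cells of `[n]^k` such
that every line of the grid contains exactly one cell of `S`. -/
noncomputable def spiCount (k n : ℕ) : ℕ :=
  Set.ncard {S : Finset (Cell k n) |
    S.card = n ^ (k - 1) ∧ ExactlyOnePerLine k n S}

/-- The circuit obtained from `C` by replacing the gate `g` with the Boolean
constant `1`. -/
def Circuit.replaceByTrue {V : Type} (C : Circuit V) (g : Fin C.n) : Circuit V where
  n := C.n
  label := Function.update C.label g (GateLabel.const true)
  wf := by
    intro i a b hab
    rcases eq_or_ne i g with rfl | hig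
    · rw [Function.update_self] at hab
      rcases hab with h | h <;> exact GateLabel.noConfusion rfl (heq_of_eq h)
    · rw [Function.update_of_ne hig] at hab
      exact C.wf i a b hab

end MC

namespace MC

section Aux

variable {V : Type} [DecidableEq V] {C : Circuit V}

/-- The finset of variables occurring in a term. -/
def tvars (t : List (V ⊕ Bool)) : Finset V := (t.filterMap Sum.getLeft?).toFinset

lemma mem_tvars {t : List (V ⊕ Bool)} {v : V} : v ∈ tvars t ↔ Sum.inl v ∈ t := by
  simp only [tvars, List.mem_toFinset, List.mem_filterMap]
  constructor
  · rintro ⟨a, ha, h⟩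
    rcases a with w | b
    · simp only [Sum.getLeft?] at h; cases h; exact ha
    · simp [Sum.getLeft?] at h
  · intro h; exact ⟨Sum.inl v, h, rfl⟩

lemma termVars_eq (t : List (V ⊕ Bool)) : termVars t = ↑(tvars t) := by
  ext v; simp [termVars, mem_tvars]

lemma tvars_append (t₁ t₂ : List (V ⊕ Bool)) :
    tvars (t₁ ++ t₂) = tvars t₁ ∪ tvars t₂ := by
  ext v; simp [mem_tvars]

lemma termEval_iff {σ : V → Bool} {t : List (V ⊕ Bool)} :
    termEval σ t = true ↔ ∀ x ∈ t, litEval σ x = true := by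
  simp [termEval, List.all_eq_true]

lemma termEval_append {σ : V → Bool} {t₁ t₂ : List (V ⊕ Bool)} :
    termEval σ (t₁ ++ t₂) = (termEval σ t₁ && termEval σ t₂) := by
  simp [termEval]

lemma gateFun_mono (g : Fin C.n) : MonotoneFun (C.gateFun g) := by
  rintro σ σ' hle ⟨t, ht, hev⟩
  refine ⟨t, ht, termEval_iff.2 fun x hx => ?_⟩
  have := termEval_iff.1 hev x hx
  rcases x with v | b
  · exact hle v this
  · exact this

lemma memTerms_var {i : Fin C.n} {v : V} (h : C.label i = .var v)
    {t : List (V ⊕ Bool)} (ht : C.MemTerms i t) : t = [Sum.inl v] := by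
  cases ht with
  | var h' => rw [h] at h'; cases h'; rfl
  | const h' => rw [h] at h'; cases h'
  | or_left h' _ _ => rw [h] at h'; cases h'
  | or_right h' _ _ => rw [h] at h'; cases h'
  | and h' _ _ _ _ => rw [h] at h'; cases h'

lemma memTerms_const {i : Fin C.n} {b : Bool} (h : C.label i = .const b)
    {t : List (V ⊕ Bool)} (ht : C.MemTerms i t) : t = [Sum.inr b] := by
  cases ht with
  | var h' => rw [h] at h'; cases h'
  | const h' => rw [h] at h'; cases h'; rfl
  | or_left h' _ _ => rw [h] at h'; cases h'
  | or_right h' _ _ => rw [h] at h'; cases h'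
  | and h' _ _ _ _ => rw [h] at h'; cases h'

lemma memTerms_or {i : Fin C.n} {a b : ℕ} (h : C.label i = .or a b)
    (ha : a < C.n) (hb : b < C.n) {t : List (V ⊕ Bool)} (ht : C.MemTerms i t) :
    C.MemTerms ⟨a, ha⟩ t ∨ C.MemTerms ⟨b, hb⟩ t := by
  cases ht with
  | var h' => rw [h] at h'; cases h'
  | const h' => rw [h] at h'; cases h'
  | or_left h' ha' hm => rw [h] at h'; cases h'; exact Or.inl hm
  | or_right h' hb' hm => rw [h] at h'; cases h'; exact Or.inr hm
  | and h' _ _ _ _ => rw [h] at h'; cases h'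

lemma memTerms_and {i : Fin C.n} {a b : ℕ} (h : C.label i = .and a b)
    (ha : a < C.n) (hb : b < C.n) {t : List (V ⊕ Bool)} (ht : C.MemTerms i t) :
    ∃ t₁ t₂, C.MemTerms ⟨a, ha⟩ t₁ ∧ C.MemTerms ⟨b, hb⟩ t₂ ∧ t = t₁ ++ t₂ := by
  cases ht with
  | var h' => rw [h] at h'; cases h'
  | const h' => rw [h] at h'; cases h'
  | or_left h' _ _ => rw [h] at h'; cases h'
  | or_right h' _ _ => rw [h] at h'; cases h'
  | and h' ha' hb' hm₁ hm₂ => rw [h] at h'; cases h'; exact ⟨_, _, hm₁, hm₂, rfl⟩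

lemma gateFun_or {i : Fin C.n} {a b : ℕ} (h : C.label i = .or a b)
    (ha : a < C.n) (hb : b < C.n) (σ : V → Bool) :
    C.gateFun i σ ↔ C.gateFun ⟨a, ha⟩ σ ∨ C.gateFun ⟨b, hb⟩ σ := by
  constructor
  · rintro ⟨t, ht, hev⟩
    rcases memTerms_or h ha hb ht with hm | hm
    · exact Or.inl ⟨t, hm, hev⟩
    · exact Or.inr ⟨t, hm, hev⟩
  · rintro (⟨t, ht, hev⟩ | ⟨t, ht, hev⟩)
    · exact ⟨t, Circuit.MemTerms.or_left h ha ht, hev⟩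
    · exact ⟨t, Circuit.MemTerms.or_right h hb ht, hev⟩

lemma gateFun_and {i : Fin C.n} {a b : ℕ} (h : C.label i = .and a b)
    (ha : a < C.n) (hb : b < C.n) (σ : V → Bool) :
    C.gateFun i σ ↔ C.gateFun ⟨a, ha⟩ σ ∧ C.gateFun ⟨b, hb⟩ σ := by
  constructor
  · rintro ⟨t, ht, hev⟩
    obtain ⟨t₁, t₂, hm₁, hm₂, rfl⟩ := memTerms_and h ha hb ht
    rw [termEval_append, Bool.and_eq_true] at hev
    exact ⟨⟨t₁, hm₁, hev.1⟩, ⟨t₂, hm₂, hev.2⟩⟩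
  · rintro ⟨⟨t₁, ht₁, hev₁⟩, ⟨t₂, ht₂, hev₂⟩⟩
    exact ⟨t₁ ++ t₂, Circuit.MemTerms.and h ha hb ht₁ ht₂,
      by rw [termEval_append, hev₁, hev₂]; rfl⟩

/-- From a prime implicant `S` of the function at gate `g` we get a term of `g`
whose variable set is exactly `S` and whose constants are all `true`. -/
lemma prime_term {g : Fin C.n} {S : Finset V}
    (hS : PrimeImplicant (C.gateFun g) S) :
    ∃ t, C.MemTerms g t ∧ tvars t = S := by
  obtain ⟨t, htm, hev⟩ := hS.1 (fun v => decide (v ∈ S)) (fun v hv => by simp [hv])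
  have hsub : tvars t ⊆ S := by
    intro v hv
    have := termEval_iff.1 hev _ (mem_tvars.1 hv)
    simpa [litEval] using this
  have hconst : ∀ b : Bool, Sum.inr b ∈ t → b = true := fun b hb =>
    termEval_iff.1 hev _ hb
  have himp : Implicant (C.gateFun g) (tvars t) := by
    intro σ hσ
    refine ⟨t, htm, termEval_iff.2 fun x hx => ?_⟩
    rcases x with w | c
    · exact hσ w (mem_tvars.2 hx)
    · exact hconst c hx
  have heq : tvars t = S := by
    by_contra hne
    exact hS.2 (tvars t) (lt_of_le_of_ne hsub hne) himp
  exact ⟨t, htm, heq⟩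

lemma depends_of_mem_prime {f : (V → Bool) → Prop} (hf : MonotoneFun f)
    {S : Finset V} (hS : PrimeImplicant f S) {v : V} (hv : v ∈ S) :
    Depends f v := by
  have hss : S.erase v ⊂ S := Finset.erase_ssubset hv
  have hni := hS.2 _ hss
  simp only [Implicant, not_forall] at hni
  obtain ⟨σ, hσ, hnf⟩ := hni
  refine ⟨σ, fun hiff => hnf ?_⟩
  have htrue : f (Function.update σ v true) := by
    apply hS.1
    intro w hw
    rcases eq_or_ne w v with rfl | hwv
    · simp
    · rw [Function.update_of_ne hwv]
      exact hσ w (Finset.mem_erase.2 ⟨hwv, hw⟩)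
  have hfalse : f (Function.update σ v false) := hiff.2 htrue
  exact hf _ σ (fun w hw => by
    rcases eq_or_ne w v with rfl | hwv
    · simp [Function.update_self] at hw
    · rwa [Function.update_of_ne hwv] at hw) hfalse

lemma exists_minimal_implicant {f : (V → Bool) → Prop} {S : Finset V}
    (hS : Implicant f S) :
    ∃ S₁ ⊆ S, PrimeImplicant f S₁ := by
  induction S using Finset.strongInduction with
  | _ S IH =>
    by_cases h : ∃ S' ⊂ S, Implicant f S'
    · obtain ⟨S', hss, himp⟩ := h
      obtain ⟨S₁, hsub, hp⟩ := IH S' hss himp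
      exact ⟨S₁, hsub.trans hss.subset, hp⟩
    · push_neg at h
      exact ⟨S, subset_rfl, hS, h⟩

lemma sum_beq_false {x y : V ⊕ Bool} (h : x ≠ y) : (x == y) = false := by
  rcases x with a | a <;> rcases y with b | b
  · exact decide_eq_false (fun hh => h (by rw [hh]))
  · rfl
  · rfl
  · exact decide_eq_false (fun hh => h (by rw [hh]))

lemma count_eq_zero' {t : List (V ⊕ Bool)} {x : V ⊕ Bool} (h : x ∉ t) :
    t.count x = 0 := by
  induction t with
  | nil => rfl
  | cons a t ih =>
    simp only [List.mem_cons, not_or] at h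
    rw [List.count_cons, ih h.2, sum_beq_false (Ne.symm h.1)]
    rfl

/-- The main induction. -/
lemma key (hml : C.Multilinear) :
    ∀ (k : ℕ) (g : Fin C.n), g.1 = k → ∀ S : Finset V,
      PrimeImplicant (C.gateFun g) S →
      ∃ t, C.MemTerms g t ∧ tvars t = S ∧ ∀ v : V, t.count (Sum.inl v) ≤ 1 := by
  intro k
  induction k using Nat.strong_induction_on with
  | _ k IH =>
  intro g hg S hS
  match hlab : C.label g with
  | .var v =>
    obtain ⟨t, htm, hv⟩ := prime_term hS
    refine ⟨t, htm, hv, fun w => ?_⟩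
    rw [memTerms_var hlab htm]
    simp only [List.count_cons, List.count_nil]
    split <;> omega
  | .const b =>
    obtain ⟨t, htm, hv⟩ := prime_term hS
    refine ⟨t, htm, hv, fun w => ?_⟩
    rw [memTerms_const hlab htm, count_eq_zero' (by simp)]
    exact Nat.zero_le _
  | .or a b =>
    obtain ⟨hak, hbk⟩ := C.wf g a b (Or.inl hlab)
    have ha : a < C.n := hak.trans g.2
    have hb : b < C.n := hbk.trans g.2
    have hmain : C.gateFun ⟨a, ha⟩ (fun v => decide (v ∈ S)) ∨
        C.gateFun ⟨b, hb⟩ (fun v => decide (v ∈ S)) := by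
      rw [← gateFun_or hlab ha hb]
      exact hS.1 _ (fun v hv => by simp [hv])
    rcases hmain with hf | hf
    · have himp : Implicant (C.gateFun ⟨a, ha⟩) S := fun σ hσ =>
        gateFun_mono _ _ σ (fun v hv => hσ v (by simpa using hv)) hf
      have hp : PrimeImplicant (C.gateFun ⟨a, ha⟩) S :=
        ⟨himp, fun S' hss himp' => hS.2 S' hss (fun σ hσ =>
          (gateFun_or hlab ha hb σ).2 (Or.inl (himp' σ hσ)))⟩
      obtain ⟨t, htm, htv, hc⟩ := IH a (hg ▸ hak) ⟨a, ha⟩ rfl S hp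
      exact ⟨t, Circuit.MemTerms.or_left hlab ha htm, htv, hc⟩
    · have himp : Implicant (C.gateFun ⟨b, hb⟩) S := fun σ hσ =>
        gateFun_mono _ _ σ (fun v hv => hσ v (by simpa using hv)) hf
      have hp : PrimeImplicant (C.gateFun ⟨b, hb⟩) S :=
        ⟨himp, fun S' hss himp' => hS.2 S' hss (fun σ hσ =>
          (gateFun_or hlab ha hb σ).2 (Or.inr (himp' σ hσ)))⟩
      obtain ⟨t, htm, htv, hc⟩ := IH b (hg ▸ hbk) ⟨b, hb⟩ rfl S hp
      exact ⟨t, Circuit.MemTerms.or_right hlab hb htm, htv, hc⟩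
  | .and a b =>
    obtain ⟨hak, hbk⟩ := C.wf g a b (Or.inr hlab)
    have ha : a < C.n := hak.trans g.2
    have hb : b < C.n := hbk.trans g.2
    have himpa : Implicant (C.gateFun ⟨a, ha⟩) S := fun σ hσ =>
      ((gateFun_and hlab ha hb σ).1 (hS.1 σ hσ)).1
    have himpb : Implicant (C.gateFun ⟨b, hb⟩) S := fun σ hσ =>
      ((gateFun_and hlab ha hb σ).1 (hS.1 σ hσ)).2
    obtain ⟨S₁, hsub₁, hp₁⟩ := exists_minimal_implicant himpa
    obtain ⟨S₂, hsub₂, hp₂⟩ := exists_minimal_implicant himpb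
    have hunion : Implicant (C.gateFun g) (S₁ ∪ S₂) := fun σ hσ =>
      (gateFun_and hlab ha hb σ).2
        ⟨hp₁.1 σ (fun v hv => hσ v (Finset.mem_union_left _ hv)),
         hp₂.1 σ (fun v hv => hσ v (Finset.mem_union_right _ hv))⟩
    have hSeq : S₁ ∪ S₂ = S := by
      by_contra hne
      exact hS.2 _ (lt_of_le_of_ne (Finset.union_subset hsub₁ hsub₂) hne) hunion
    have hdisj : ∀ v, v ∈ S₁ → v ∉ S₂ := fun v h1 h2 =>
      hml g a b hlab ha hb v
        ⟨depends_of_mem_prime (gateFun_mono _) hp₁ h1,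
         depends_of_mem_prime (gateFun_mono _) hp₂ h2⟩
    obtain ⟨t₁, htm₁, htv₁, hc₁⟩ := IH a (hg ▸ hak) ⟨a, ha⟩ rfl S₁ hp₁
    obtain ⟨t₂, htm₂, htv₂, hc₂⟩ := IH b (hg ▸ hbk) ⟨b, hb⟩ rfl S₂ hp₂
    refine ⟨t₁ ++ t₂, Circuit.MemTerms.and hlab ha hb htm₁ htm₂,
      by rw [tvars_append, htv₁, htv₂, hSeq], fun v => ?_⟩
    rw [List.count_append]
    by_cases hv1 : v ∈ S₁
    · have h2 : t₂.count (Sum.inl v) = 0 := count_eq_zero' (fun h =>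
        hdisj v hv1 (by rw [← htv₂]; exact mem_tvars.2 h))
      have := hc₁ v
      omega
    · have h1 : t₁.count (Sum.inl v) = 0 := count_eq_zero' (fun h =>
        hv1 (by rw [← htv₁]; exact mem_tvars.2 h))
      have := hc₂ v
      omega

end Aux

/-- Every monotone multilinear Boolean circuit is `1`-multilinear: for each
output gate `o` and each prime implicant `S` of the function computed at `o`,
there is a term `t ∈ T(o)` representing `S` in which no variable occurs more
than once. -/
theorem multilinear_is_one_multilinear {V : Type} [DecidableEq V] (C : Circuit V)
    (hml : C.Multilinear) (o : Fin C.n) (S : Finset V)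
    (hS : PrimeImplicant (C.gateFun o) S) :
    ∃ t : List (V ⊕ Bool), C.MemTerms o t ∧ Represents t S ∧
      ∀ v : V, t.count (Sum.inl v) ≤ 1 := by
  obtain ⟨t, htm, htv, hc⟩ := key hml o.1 o rfl S hS
  exact ⟨t, htm, by rw [Represents, termVars_eq, htv], hc⟩

end MC
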